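/- Let Δ and Δ̃ be real N×m matrices with ΔᵀΔ invertible, let λ > 0, and set A = Δ̃ᵀΔ̃ + λI, B = ΔᵀΔ. Define α = B⁻¹𝟏/(𝟏ᵀB⁻¹𝟏) and α̃ = A⁻¹𝟏/(𝟏ᵀA⁻¹𝟏). Then ‖α̃ - α‖₂ ≤ ((‖Δ̃ᵀΔ̃ - ΔᵀΔ‖ + λ)/λ)·‖α‖₂, where matrix norms are operator norms. -/

import Mathlib

open Matrix
open scoped Matrix.Norms.L2Operator

/-- Second bound of Proposition 1 (perturbation bound): with `A = Δ̃ᵀΔ̃ + λI`, `B = ΔᵀΔ`,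
`α = B⁻¹𝟏/(𝟏ᵀB⁻¹𝟏)` and `α̃ = A⁻¹𝟏/(𝟏ᵀA⁻¹𝟏)`, one has
`‖α̃ - α‖ ≤ ((‖Δ̃ᵀΔ̃ - ΔᵀΔ‖ + λ)/λ)·‖α‖`. -/
theorem raa_coefficient_perturbation_bound
    {N m : ℕ} (Δ Δt : Matrix (Fin N) (Fin m) ℝ) (hinv : Invertible (Δᵀ * Δ))
    (lam : ℝ) (hlam : 0 < lam)
    (A B : Matrix (Fin m) (Fin m) ℝ)
    (hA : A = Δtᵀ * Δt + lam • (1 : Matrix (Fin m) (Fin m) ℝ))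
    (hB : B = Δᵀ * Δ)
    (α αt : Fin m → ℝ)
    (hα : α = (1 / ((1 : Fin m → ℝ) ⬝ᵥ B⁻¹.mulVec 1)) • B⁻¹.mulVec 1)
    (hαt : αt = (1 / ((1 : Fin m → ℝ) ⬝ᵥ A⁻¹.mulVec 1)) • A⁻¹.mulVec 1) :
    Real.sqrt (∑ i, (αt i - α i) ^ 2) ≤
      ((‖Δtᵀ * Δt - Δᵀ * Δ‖ + lam) / lam) * Real.sqrt (∑ i, α i ^ 2) := by
  rcases Nat.eq_zero_or_pos m with hm | hm
  · subst hm
    simp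
  -- positive definiteness
  have h1ne : (1 : Fin m → ℝ) ≠ 0 := by
    intro h
    have := congrFun h ⟨0, hm⟩
    simp at this
  have hconj : ∀ (M : Matrix (Fin N) (Fin m) ℝ), Mᴴ = Mᵀ := fun M => by
    ext i j; simp [conjTranspose_apply]
  have hBsd : B.PosSemidef := by
    rw [hB, ← hconj Δ]; exact posSemidef_conjTranspose_mul_self Δ
  letI : Invertible B := by rw [hB]; exact hinv
  have hBpd : B.PosDef := by
    refine PosDef.of_dotProduct_mulVec_pos hBsd.1 fun x hx => ?_
    rcases lt_or_eq_of_le (hBsd.dotProduct_mulVec_nonneg x) with h | h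
    · exact h
    have hBx : B *ᵥ x = 0 := (hBsd.dotProduct_mulVec_zero_iff x).mp h.symm
    have : x = 0 := Matrix.mulVec_injective_of_invertible B
      (by simp [hBx] : B *ᵥ x = B *ᵥ 0)
    exact absurd this hx
  have hlamI : (lam • (1 : Matrix (Fin m) (Fin m) ℝ)).PosDef := by
    rw [smul_one_eq_diagonal]
    exact PosDef.diagonal fun _ => hlam
  have hApd : A.PosDef := by
    rw [hA]
    refine Matrix.PosDef.posSemidef_add ?_ hlamI
    rw [← hconj Δt]; exact posSemidef_conjTranspose_mul_self Δt
  letI : Invertible A := hApd.isUnit.invertible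
  set s : ℝ := (1 : Fin m → ℝ) ⬝ᵥ B⁻¹.mulVec 1 with hsdef
  set st : ℝ := (1 : Fin m → ℝ) ⬝ᵥ A⁻¹.mulVec 1 with hstdef
  have hs : 0 < s := by simpa using hBpd.inv.dotProduct_mulVec_pos h1ne
  have hst : 0 < st := by simpa using hApd.inv.dotProduct_mulVec_pos h1ne
  have hBα : B *ᵥ α = (1/s) • (1 : Fin m → ℝ) := by
    rw [hα, mulVec_smul, mulVec_mulVec, Matrix.mul_nonsing_inv _ (isUnit_det_of_invertible B),
      one_mulVec]
  have hAαt : A *ᵥ αt = (1/st) • (1 : Fin m → ℝ) := by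
    rw [hαt, mulVec_smul, mulVec_mulVec, Matrix.mul_nonsing_inv _ (isUnit_det_of_invertible A),
      one_mulVec]
  have h1α : (1 : Fin m → ℝ) ⬝ᵥ α = 1 := by
    rw [hα, dotProduct_smul, ← hsdef, smul_eq_mul]
    field_simp
  have h1αt : (1 : Fin m → ℝ) ⬝ᵥ αt = 1 := by
    rw [hαt, dotProduct_smul, ← hstdef, smul_eq_mul]
    field_simp
  set d : Fin m → ℝ := αt - α with hddef
  have hd1 : d ⬝ᵥ (1 : Fin m → ℝ) = 0 := by
    rw [hddef, sub_dotProduct, dotProduct_comm, h1αt, dotProduct_comm, h1α, sub_self]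
  -- key identity
  have key : d ⬝ᵥ (A *ᵥ d) = -(d ⬝ᵥ ((A - B) *ᵥ α)) := by
    have h1 : d ⬝ᵥ (A *ᵥ αt) = 0 := by
      rw [hAαt, dotProduct_smul, hd1, smul_zero]
    have h2 : d ⬝ᵥ (B *ᵥ α) = 0 := by
      rw [hBα, dotProduct_smul, hd1, smul_zero]
    have : A *ᵥ d = A *ᵥ αt - A *ᵥ α := by rw [hddef, mulVec_sub]
    rw [this, dotProduct_sub, h1, zero_sub, sub_mulVec, dotProduct_sub, h2, sub_zero]
  -- lower bound: lam * (d ⬝ᵥ d) ≤ d ⬝ᵥ (A *ᵥ d)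
  have lower : lam * (d ⬝ᵥ d) ≤ d ⬝ᵥ (A *ᵥ d) := by
    rw [hA, add_mulVec, dotProduct_add, smul_mulVec, one_mulVec, dotProduct_smul,
      smul_eq_mul]
    have : d ⬝ᵥ ((Δtᵀ * Δt) *ᵥ d) = (Δt *ᵥ d) ⬝ᵥ (Δt *ᵥ d) := by
      rw [← mulVec_mulVec, dotProduct_mulVec, vecMul_transpose]
    rw [this]
    have h0 : 0 ≤ (Δt *ᵥ d) ⬝ᵥ (Δt *ᵥ d) :=
      Finset.sum_nonneg fun i _ => mul_self_nonneg _
    linarith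
  -- Euclidean space framing
  set d' : EuclideanSpace ℝ (Fin m) := (WithLp.equiv 2 (Fin m → ℝ)).symm d with hd'
  set α' : EuclideanSpace ℝ (Fin m) := (WithLp.equiv 2 (Fin m → ℝ)).symm α with hα'
  have hnormd : ‖d'‖ = Real.sqrt (∑ i, (αt i - α i) ^ 2) := by
    rw [EuclideanSpace.norm_eq]
    congr 1
    refine Finset.sum_congr rfl fun i _ => ?_
    simp [hd', hddef, Real.norm_eq_abs, sq_abs]
  have hnormα : ‖α'‖ = Real.sqrt (∑ i, α i ^ 2) := by
    rw [EuclideanSpace.norm_eq]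
    congr 1
    refine Finset.sum_congr rfl fun i _ => ?_
    simp [hα', Real.norm_eq_abs, sq_abs]
  -- Cauchy-Schwarz and operator norm
  have hCS : |d ⬝ᵥ ((A - B) *ᵥ α)| ≤ ‖d'‖ * (‖A - B‖ * ‖α'‖) := by
    have h1 : |d ⬝ᵥ ((A - B) *ᵥ α)| ≤
        ‖d'‖ * ‖(WithLp.equiv 2 (Fin m → ℝ)).symm ((A - B) *ᵥ α)‖ := by
      have heq : inner ℝ d' ((WithLp.equiv 2 (Fin m → ℝ)).symm ((A - B) *ᵥ α)) =
          d ⬝ᵥ ((A - B) *ᵥ α) := by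
        simp [PiLp.inner_apply, RCLike.inner_apply, dotProduct, hd',
          WithLp.equiv_symm_apply, mul_comm]
      rw [← heq]
      exact abs_real_inner_le_norm d' _
    have h2 : ‖(WithLp.equiv 2 (Fin m → ℝ)).symm ((A - B) *ᵥ α)‖ ≤ ‖A - B‖ * ‖α'‖ :=
      (A - B).l2_opNorm_mulVec α'
    calc |d ⬝ᵥ ((A - B) *ᵥ α)| ≤ ‖d'‖ * ‖(WithLp.equiv 2 (Fin m → ℝ)).symm ((A - B) *ᵥ α)‖ := h1
    _ ≤ ‖d'‖ * (‖A - B‖ * ‖α'‖) := by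
        exact mul_le_mul_of_nonneg_left h2 (norm_nonneg _)
  -- norm of A - B
  have hnormAB : ‖A - B‖ ≤ ‖Δtᵀ * Δt - Δᵀ * Δ‖ + lam := by
    have hABeq : A - B = (Δtᵀ * Δt - Δᵀ * Δ) + lam • (1 : Matrix (Fin m) (Fin m) ℝ) := by
      rw [hA, hB]; abel
    have hone : ‖(1 : Matrix (Fin m) (Fin m) ℝ)‖ ≤ 1 := by
      rw [Matrix.cstar_norm_def,
        show (toEuclideanCLM (n := Fin m) (𝕜 := ℝ)) 1 = 1 from map_one _,
        ContinuousLinearMap.one_def]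
      exact ContinuousLinearMap.norm_id_le
    calc ‖A - B‖ = ‖(Δtᵀ * Δt - Δᵀ * Δ) + lam • (1 : Matrix (Fin m) (Fin m) ℝ)‖ := by
          rw [hABeq]
    _ ≤ ‖Δtᵀ * Δt - Δᵀ * Δ‖ + ‖lam • (1 : Matrix (Fin m) (Fin m) ℝ)‖ := norm_add_le _ _
    _ ≤ ‖Δtᵀ * Δt - Δᵀ * Δ‖ + lam := by
        have : ‖lam • (1 : Matrix (Fin m) (Fin m) ℝ)‖ = |lam| * ‖(1 : Matrix (Fin m) (Fin m) ℝ)‖ := by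
          rw [norm_smul, Real.norm_eq_abs]
        rw [this, abs_of_pos hlam]
        nlinarith [hone, hlam.le]
  -- assemble
  have hdd : d ⬝ᵥ d = ∑ i, (αt i - α i) ^ 2 := by
    simp [dotProduct, hddef, pow_two]
  set t : ℝ := Real.sqrt (∑ i, (αt i - α i) ^ 2) with htdef
  set a : ℝ := Real.sqrt (∑ i, α i ^ 2) with hadef
  have ht0 : 0 ≤ t := Real.sqrt_nonneg _
  have ha0 : 0 ≤ a := Real.sqrt_nonneg _
  have htsq : t ^ 2 = ∑ i, (αt i - α i) ^ 2 :=
    Real.sq_sqrt (Finset.sum_nonneg fun i _ => sq_nonneg _)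
  have hC0 : 0 ≤ ‖Δtᵀ * Δt - Δᵀ * Δ‖ := norm_nonneg _
  have hchain : lam * t ^ 2 ≤ t * ((‖Δtᵀ * Δt - Δᵀ * Δ‖ + lam) * a) := by
    have h1 : lam * t ^ 2 ≤ d ⬝ᵥ (A *ᵥ d) := by rw [htsq, ← hdd]; exact lower
    have h2 : d ⬝ᵥ (A *ᵥ d) ≤ |d ⬝ᵥ ((A - B) *ᵥ α)| := by
      rw [key]; exact neg_le_abs _
    have h3 : ‖d'‖ * (‖A - B‖ * ‖α'‖) ≤ t * ((‖Δtᵀ * Δt - Δᵀ * Δ‖ + lam) * a) := by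
      rw [hnormd, hnormα]
      exact mul_le_mul_of_nonneg_left (mul_le_mul_of_nonneg_right hnormAB ha0) ht0
    linarith [hCS]
  rw [div_mul_eq_mul_div, le_div_iff₀ hlam]
  rcases eq_or_lt_of_le ht0 with h | h
  · rw [← h, zero_mul]
    positivity
  · nlinarith
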